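/- Let δ > 0 and suppose a_j ≥ exp(δ j) for all j ≥ j*. Let b₁, b₂, … ≥ 1 with B = ∑_{j=1}^∞ 1/b_j < ∞. Then for every real x > a₁ and every s ∈ ℕ, ∏_{j=1}^{min(s, j(x))} (1 + 2(x/a_j)^{1/b_j}) ≤ 3^{j*} · x^{B + (log 3)/δ}, where j(x) = sup{j : x > a_j}. -/

import Mathlib

theorem product_upper_bound (a b : ℕ → ℝ) (δ : ℝ) (hδ : 0 < δ) (jstar : ℕ)
    (ha1 : ∀ j, 1 ≤ a j) (hae : ∀ j, jstar ≤ j → Real.exp (δ * j) ≤ a j)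
    (hb : ∀ j, 1 ≤ b j) (hBsum : Summable fun j => 1 / b j) (B : ℝ)
    (hB : B = ∑' j : ℕ, 1 / b j)
    (x : ℝ) (hx : a 1 < x) (s : ℕ) :
    ∏ j ∈ Finset.Icc 1 (min s (sSup {j : ℕ | a j < x})),
        (1 + 2 * (x / a j) ^ (1 / b j)) ≤
      3 ^ jstar * x ^ (B + Real.log 3 / δ) := by
  have hx1 : (1 : ℝ) ≤ x := le_trans (ha1 1) hx.le
  have hx0 : (0 : ℝ) < x := lt_of_lt_of_le one_pos hx1
  have hlogx : 0 ≤ Real.log x := Real.log_nonneg hx1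
  have hlog3 : 0 ≤ Real.log 3 := Real.log_nonneg (by norm_num)
  set S : Set ℕ := {j : ℕ | a j < x} with hS
  set J : ℕ := sSup S with hJ
  set N : ℕ := min s J with hN
  have hbpos : ∀ j, (0:ℝ) < b j := fun j => lt_of_lt_of_le one_pos (hb j)
  have hinv : ∀ j, (0:ℝ) ≤ 1 / b j := fun j => div_nonneg zero_le_one (hbpos j).le
  -- each factor bound
  have hfac : ∀ j ∈ Finset.Icc 1 N, 1 + 2 * (x / a j) ^ (1 / b j) ≤ 3 * x ^ (1 / b j) := by
    intro j _
    have haj : (0:ℝ) < a j := lt_of_lt_of_le one_pos (ha1 j)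
    have h1 : (x / a j) ^ (1 / b j) ≤ x ^ (1 / b j) :=
      Real.rpow_le_rpow (by positivity) (div_le_self hx0.le (ha1 j)) (hinv j)
    have h2 : (1:ℝ) ≤ x ^ (1 / b j) := Real.one_le_rpow hx1 (hinv j)
    nlinarith
  have hnonneg : ∀ j ∈ Finset.Icc 1 N, (0:ℝ) ≤ 1 + 2 * (x / a j) ^ (1 / b j) := by
    intro j _
    have haj : (0:ℝ) < a j := lt_of_lt_of_le one_pos (ha1 j)
    have := Real.rpow_nonneg (le_of_lt (div_pos hx0 haj)) (1 / b j)
    linarith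
  calc ∏ j ∈ Finset.Icc 1 N, (1 + 2 * (x / a j) ^ (1 / b j))
      ≤ ∏ j ∈ Finset.Icc 1 N, (3 * x ^ (1 / b j)) :=
        Finset.prod_le_prod hnonneg hfac
    _ = 3 ^ N * x ^ (∑ j ∈ Finset.Icc 1 N, 1 / b j) := by
        rw [Finset.prod_mul_distrib, Finset.prod_const, Nat.card_Icc,
          ← Real.rpow_sum_of_pos hx0]
        norm_num
    _ ≤ (3 ^ jstar * x ^ (Real.log 3 / δ)) * x ^ B := by
        have hsum_le : ∑ j ∈ Finset.Icc 1 N, 1 / b j ≤ B := by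
          rw [hB]
          exact Summable.sum_le_tsum _ (fun j _ => hinv j) hBsum
        have hxB : x ^ (∑ j ∈ Finset.Icc 1 N, 1 / b j) ≤ x ^ B :=
          Real.rpow_le_rpow_of_exponent_le hx1 hsum_le
        have h3N : (3:ℝ) ^ N ≤ 3 ^ jstar * x ^ (Real.log 3 / δ) := by
          -- sSup facts
          have hmem1 : (1:ℕ) ∈ S := hx
          have hbdd : BddAbove S := by
            refine ⟨jstar + Nat.ceil (Real.log x / δ), ?_⟩
            intro j hj
            rcases lt_or_ge j jstar with h | h
            · exact le_trans h.le (Nat.le_add_right _ _)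
            · have h1 : Real.exp (δ * j) < x := lt_of_le_of_lt (hae j h) hj
              have h2 : δ * j < Real.log x := by
                have h1' := h1
                rw [← Real.exp_log hx0] at h1'
                exact Real.exp_lt_exp.mp h1'
              have h3 : (j:ℝ) ≤ Real.log x / δ := le_of_lt ((lt_div_iff₀' hδ).mpr h2)
              have h4 : (j:ℝ) ≤ (Nat.ceil (Real.log x / δ) : ℝ) :=
                le_trans h3 (Nat.le_ceil _)
              have h5 : j ≤ Nat.ceil (Real.log x / δ) := by exact_mod_cast h4
              exact le_trans h5 (Nat.le_add_left _ _)
          have hJmem : J ∈ S := Nat.sSup_mem ⟨1, hmem1⟩ hbdd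
          have hNJ : N ≤ J := min_le_right _ _
          have hone_le : (1:ℝ) ≤ x ^ (Real.log 3 / δ) :=
            Real.one_le_rpow hx1 (by positivity)
          rcases le_or_gt J jstar with h | h
          · have : (3:ℝ) ^ N ≤ 3 ^ jstar :=
              pow_le_pow_right₀ (by norm_num) (le_trans hNJ h)
            calc (3:ℝ) ^ N ≤ 3 ^ jstar := this
              _ = 3 ^ jstar * 1 := (mul_one _).symm
              _ ≤ 3 ^ jstar * x ^ (Real.log 3 / δ) := by
                  have : (0:ℝ) ≤ 3 ^ jstar := by positivity
                  nlinarith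
          · have h1 : Real.exp (δ * J) < x := lt_of_le_of_lt (hae J h.le) hJmem
            have h2 : δ * J < Real.log x := by
              have h1' := h1
              rw [← Real.exp_log hx0] at h1'
              exact Real.exp_lt_exp.mp h1'
            have h3 : (J:ℝ) ≤ Real.log x / δ := le_of_lt ((lt_div_iff₀' hδ).mpr h2)
            have key : (3:ℝ) ^ J ≤ x ^ (Real.log 3 / δ) := by
              rw [← Real.rpow_natCast 3, Real.rpow_def_of_pos (by norm_num : (0:ℝ) < 3),
                Real.rpow_def_of_pos hx0]
              apply Real.exp_le_exp.mpr
              have h5 := mul_le_mul_of_nonneg_right h3 hlog3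
              have heq : Real.log x / δ * Real.log 3 = Real.log x * (Real.log 3 / δ) := by ring
              linarith
            have h3pow : (3:ℝ) ^ N ≤ 3 ^ J := pow_le_pow_right₀ (by norm_num) hNJ
            have hone3 : (1:ℝ) ≤ (3:ℝ) ^ jstar := one_le_pow₀ (by norm_num)
            calc (3:ℝ) ^ N ≤ x ^ (Real.log 3 / δ) := le_trans h3pow key
              _ = 1 * x ^ (Real.log 3 / δ) := (one_mul _).symm
              _ ≤ 3 ^ jstar * x ^ (Real.log 3 / δ) := by
                  have : (0:ℝ) ≤ x ^ (Real.log 3 / δ) := by positivity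
                  nlinarith
        have hxsum0 : (0:ℝ) ≤ x ^ (∑ j ∈ Finset.Icc 1 N, 1 / b j) := by positivity
        have h3jx0 : (0:ℝ) ≤ 3 ^ jstar * x ^ (Real.log 3 / δ) := by positivity
        exact mul_le_mul h3N hxB hxsum0 h3jx0
    _ = 3 ^ jstar * x ^ (B + Real.log 3 / δ) := by
        rw [Real.rpow_add hx0, mul_assoc, mul_comm (x ^ (Real.log 3 / δ))]
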